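/- arXiv:1310.3463 — 3 statements merged into one kernel-verified Lean document; each statement's English description precedes it below -/
import Mathlib

section
/- Let k2 > k1 and let φ be defined by φ(s) = ((1+k1 s²)(1+k2 s²))^{1/4} · exp(∫₀^s √(k2−k1)/(2(1+k1 t²)√(1+k2 t²)) dt) on a symmetric interval where 1+k1 s² > 0. Then 1/φ(s)² + 1/φ(−s)² = 2/(1+k1 s²) for all s in the interval. -/
lemma key_int (k1 k2 b0 : ℝ) (hk : k1 < k2) (hb0 : 0 < b0)
    (hpos : ∀ s ∈ Set.Ioo (-b0) b0, 0 < 1 + k1 * s ^ 2)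
    (s : ℝ) (hs : s ∈ Set.Ioo (-b0) b0) :
    (∫ t in (0 : ℝ)..s,
        Real.sqrt (k2 - k1) / (2 * (1 + k1 * t ^ 2) * Real.sqrt (1 + k2 * t ^ 2)))
      = (1/4) * Real.log ((Real.sqrt (1 + k2 * s ^ 2) + Real.sqrt (k2 - k1) * s) /
          (Real.sqrt (1 + k2 * s ^ 2) - Real.sqrt (k2 - k1) * s)) := by
  set c := Real.sqrt (k2 - k1) with hcdef
  have hc2 : c ^ 2 = k2 - k1 := Real.sq_sqrt (by linarith)
  have hc : 0 < c := Real.sqrt_pos.mpr (by linarith)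
  -- membership of uIcc points
  have hsub : Set.uIcc (0:ℝ) s ⊆ Set.Ioo (-b0) b0 := by
    intro t ht
    rcases Set.mem_uIcc.mp ht with h | h
    · exact ⟨by nlinarith [hs.1, hs.2], by nlinarith [hs.1, hs.2]⟩
    · exact ⟨by nlinarith [hs.1, hs.2], by nlinarith [hs.1, hs.2]⟩
  have hAB : ∀ t ∈ Set.Ioo (-b0) b0, 0 < 1 + k2 * t ^ 2 := by
    intro t ht
    have := hpos t ht
    nlinarith [sq_nonneg t]
  -- facts at a point
  have hfacts : ∀ t ∈ Set.Ioo (-b0) b0,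
      0 < Real.sqrt (1 + k2 * t ^ 2) ∧
      0 < Real.sqrt (1 + k2 * t ^ 2) + c * t ∧
      0 < Real.sqrt (1 + k2 * t ^ 2) - c * t := by
    intro t ht
    have hB := hAB t ht
    have hA := hpos t ht
    have hsb : 0 < Real.sqrt (1 + k2 * t ^ 2) := Real.sqrt_pos.mpr hB
    have hsb2 : Real.sqrt (1 + k2 * t ^ 2) ^ 2 = 1 + k2 * t ^ 2 := Real.sq_sqrt hB.le
    have huv : (Real.sqrt (1 + k2 * t ^ 2) + c * t) * (Real.sqrt (1 + k2 * t ^ 2) - c * t)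
        = 1 + k1 * t ^ 2 := by nlinarith [hsb2, hc2]
    constructor
    · exact hsb
    constructor
    · nlinarith [huv, hA, hsb]
    · nlinarith [huv, hA, hsb]
  set F : ℝ → ℝ := fun t => (1/4) * (Real.log (Real.sqrt (1 + k2 * t ^ 2) + c * t)
      - Real.log (Real.sqrt (1 + k2 * t ^ 2) - c * t)) with hFdef
  have hderiv : ∀ t ∈ Set.uIcc (0:ℝ) s,
      HasDerivAt F (c / (2 * (1 + k1 * t ^ 2) * Real.sqrt (1 + k2 * t ^ 2))) t := by
    intro t ht
    have htmem := hsub ht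
    obtain ⟨hsb, hu, hv⟩ := hfacts t htmem
    have hA := hpos t htmem
    have hB := hAB t htmem
    have hsb2 : Real.sqrt (1 + k2 * t ^ 2) ^ 2 = 1 + k2 * t ^ 2 := Real.sq_sqrt hB.le
    have h1 : HasDerivAt (fun t : ℝ => 1 + k2 * t ^ 2) (2 * k2 * t) t := by
      have := ((hasDerivAt_pow 2 t).const_mul k2).const_add 1
      simpa [mul_comm, mul_assoc, mul_left_comm] using this
    have h2 : HasDerivAt (fun t : ℝ => Real.sqrt (1 + k2 * t ^ 2))
        (2 * k2 * t / (2 * Real.sqrt (1 + k2 * t ^ 2))) t := h1.sqrt (by positivity)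
    have h3 : HasDerivAt (fun t : ℝ => Real.sqrt (1 + k2 * t ^ 2) + c * t)
        (2 * k2 * t / (2 * Real.sqrt (1 + k2 * t ^ 2)) + c) t := by
      exact (h2.add ((hasDerivAt_id' t).const_mul c)).congr_deriv (by ring)
    have h4 : HasDerivAt (fun t : ℝ => Real.sqrt (1 + k2 * t ^ 2) - c * t)
        (2 * k2 * t / (2 * Real.sqrt (1 + k2 * t ^ 2)) - c) t := by
      exact (h2.sub ((hasDerivAt_id' t).const_mul c)).congr_deriv (by ring)
    have h5 := (h3.log hu.ne').sub (h4.log hv.ne')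
    have h6 := h5.const_mul (1/4 : ℝ)
    refine h6.congr_deriv ?_
    symm
    rw [div_sub_div _ _ hu.ne' hv.ne']
    have huv : (Real.sqrt (1 + k2 * t ^ 2) + c * t) * (Real.sqrt (1 + k2 * t ^ 2) - c * t)
        = 1 + k1 * t ^ 2 := by nlinarith [hsb2, hc2]
    rw [huv]
    field_simp
    rw [mul_comm (t ^ 2) k2]
    field_simp
    linear_combination (-4 * c) * hsb2
  have hcont : IntervalIntegrable
      (fun t => c / (2 * (1 + k1 * t ^ 2) * Real.sqrt (1 + k2 * t ^ 2))) MeasureTheory.volume 0 s := by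
    apply ContinuousOn.intervalIntegrable
    apply ContinuousOn.div continuousOn_const
    · apply Continuous.continuousOn
      exact (continuous_const.mul (continuous_const.add
        (continuous_const.mul (continuous_pow 2)))).mul
        (Real.continuous_sqrt.comp (by fun_prop))
    · intro t ht
      have hA := hpos t (hsub ht)
      have hB := hAB t (hsub ht)
      have hsb : 0 < Real.sqrt (1 + k2 * t ^ 2) := Real.sqrt_pos.mpr hB
      positivity
  have := intervalIntegral.integral_eq_sub_of_hasDerivAt hderiv hcont
  rw [this]
  obtain ⟨hsb, hu, hv⟩ := hfacts s hs
  simp only [hFdef]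
  rw [Real.log_div hu.ne' hv.ne']
  norm_num [Real.sqrt_one]

/-- `1/φ(s)² + 1/φ(−s)² = 2/(1+k1 s²)` on a symmetric interval. -/
theorem stmt_4 (k1 k2 b0 : ℝ) (hk : k1 < k2) (hb0 : 0 < b0)
    (hpos : ∀ s ∈ Set.Ioo (-b0) b0, 0 < 1 + k1 * s ^ 2)
    (φ : ℝ → ℝ)
    (hφ : ∀ s, φ s = ((1 + k1 * s ^ 2) * (1 + k2 * s ^ 2)) ^ ((1 : ℝ) / 4) *
      Real.exp (∫ t in (0 : ℝ)..s,
        Real.sqrt (k2 - k1) / (2 * (1 + k1 * t ^ 2) * Real.sqrt (1 + k2 * t ^ 2)))) :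
    ∀ s ∈ Set.Ioo (-b0) b0,
      1 / (φ s) ^ 2 + 1 / (φ (-s)) ^ 2 = 2 / (1 + k1 * s ^ 2) := by
  intro s hs
  have hns : -s ∈ Set.Ioo (-b0) b0 := ⟨by linarith [hs.2], by linarith [hs.1]⟩
  set c := Real.sqrt (k2 - k1) with hcdef
  have hc2 : c ^ 2 = k2 - k1 := Real.sq_sqrt (by linarith)
  have hc : 0 < c := Real.sqrt_pos.mpr (by linarith)
  have hA : 0 < 1 + k1 * s ^ 2 := hpos s hs
  have hB : 0 < 1 + k2 * s ^ 2 := by nlinarith [sq_nonneg s]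
  set A := 1 + k1 * s ^ 2 with hAdef
  set B := 1 + k2 * s ^ 2 with hBdef
  have hsb : 0 < Real.sqrt B := Real.sqrt_pos.mpr hB
  have hsb2 : Real.sqrt B ^ 2 = B := Real.sq_sqrt hB.le
  set u := Real.sqrt B + c * s with hudef
  set v := Real.sqrt B - c * s with hvdef
  have huv : u * v = A := by simp only [hudef, hvdef]; nlinarith [hsb2, hc2]
  have hu : 0 < u := by nlinarith [huv, hA, hsb]
  have hv : 0 < v := by nlinarith [huv, hA, hsb]
  have h1 := key_int k1 k2 b0 hk hb0 hpos s hs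
  have h2 := key_int k1 k2 b0 hk hb0 hpos (-s) hns
  rw [hφ s, hφ (-s), h1, h2]
  have hnegsq : (-s) ^ 2 = s ^ 2 := by ring
  rw [hnegsq]
  -- exp of (1/4) log = rpow 1/4
  have he1 : Real.exp (1/4 * Real.log (u / v)) = (u / v) ^ ((1:ℝ)/4) := by
    rw [Real.rpow_def_of_pos (div_pos hu hv), mul_comm]
  have he2 : Real.exp (1/4 * Real.log ((Real.sqrt B + c * -s) / (Real.sqrt B - c * -s)))
      = (v / u) ^ ((1:ℝ)/4) := by
    have : Real.sqrt B + c * -s = v := by rw [hvdef]; ring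
    have h' : Real.sqrt B - c * -s = u := by rw [hudef]; ring
    rw [this, h', Real.rpow_def_of_pos (div_pos hv hu), mul_comm]
  rw [he1, he2]
  have hsq : ∀ x : ℝ, 0 < x → (x ^ ((1:ℝ)/4)) ^ 2 = Real.sqrt x := by
    intro x hx
    rw [← Real.rpow_natCast (x ^ ((1:ℝ)/4)) 2, ← Real.rpow_mul hx.le, Real.sqrt_eq_rpow]
    norm_num
  rw [mul_pow, mul_pow, hsq _ (mul_pos hA hB), hsq _ (div_pos hu hv), hsq _ (div_pos hv hu)]
  rw [Real.sqrt_mul hA.le, Real.sqrt_div' u hv.le, Real.sqrt_div' v hu.le]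
  have hsu : 0 < Real.sqrt u := Real.sqrt_pos.mpr hu
  have hsv : 0 < Real.sqrt v := Real.sqrt_pos.mpr hv
  have hsa : 0 < Real.sqrt A := Real.sqrt_pos.mpr hA
  have hsuv : Real.sqrt u * Real.sqrt v = Real.sqrt A := by
    rw [← Real.sqrt_mul hu.le, huv]
  have hsa2 : Real.sqrt A ^ 2 = A := Real.sq_sqrt hA.le
  have hsu2 : Real.sqrt u ^ 2 = u := Real.sq_sqrt hu.le
  have hsv2 : Real.sqrt v ^ 2 = v := Real.sq_sqrt hv.le
  have hsum : u + v = 2 * Real.sqrt B := by rw [hudef, hvdef]; ring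
  field_simp
  linear_combination A * hsv2 + A * hsu2 + A * hsum
    - (2 * Real.sqrt A * Real.sqrt B) * hsuv - (2 * Real.sqrt B) * hsa2
end

section
/- Let k2 > k1, let b ≥ 0 satisfy 1 + k1 b² > 0 and 1 + k2 b² > 0, and let φ(s) = ((1+k1 s²)(1+k2 s²))^{1/4} · exp(∫₀^s √(k2−k1)/(2(1+k1 t²)√(1+k2 t²)) dt). Then ∫₀^π φ(b·cos t)^{−2} dt = π / √(1+k1 b²). Consequently, the function f(b) = π / ∫₀^π φ(b cos t)^{−2} dt (the n=2 volume factor) equals √(1+k1 b²). -/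
open Real intervalIntegral

lemma cos_sq_integral (m : ℝ) (hm : 0 < 1 + m) :
    (∫ t in (0:ℝ)..(Real.pi/2), (1 + m * Real.cos t ^ 2)⁻¹)
      = Real.pi / (2 * Real.sqrt (1 + m)) := by
  set q := Real.sqrt (1 + m) with hq
  have hq0 : 0 < q := Real.sqrt_pos.mpr hm
  have hqsq : q ^ 2 = 1 + m := Real.sq_sqrt hm.le
  set G : ℝ → ℝ := fun t =>
    (t + Real.arctan ((1 - q) * (Real.sin t * Real.cos t) /
      (q * Real.cos t ^ 2 + Real.sin t ^ 2))) / q with hG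
  have hv : ∀ t : ℝ, 0 < q * Real.cos t ^ 2 + Real.sin t ^ 2 := by
    intro t
    nlinarith [Real.sin_sq_add_cos_sq t, sq_nonneg (Real.sin t), sq_nonneg (Real.cos t)]
  have hpos : ∀ t : ℝ, 0 < 1 + m * Real.cos t ^ 2 := by
    intro t
    rcases lt_or_ge (Real.cos t ^ 2) 1 with h | h
    · nlinarith [mul_nonneg (sq_nonneg (Real.cos t)) hm.le]
    · nlinarith [Real.cos_sq_le_one t]
  have hderiv : ∀ t : ℝ, HasDerivAt G ((1 + m * Real.cos t ^ 2)⁻¹) t := by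
    intro t
    set s := Real.sin t with hs
    set c := Real.cos t with hc
    have hsc : s ^ 2 + c ^ 2 = 1 := Real.sin_sq_add_cos_sq t
    have hu : HasDerivAt (fun t => (1 - q) * (Real.sin t * Real.cos t))
        ((1 - q) * (c * c + s * -s)) t :=
      ((Real.hasDerivAt_sin t).mul (Real.hasDerivAt_cos t)).const_mul (1 - q)
    have hvd : HasDerivAt (fun t => q * Real.cos t ^ 2 + Real.sin t ^ 2)
        (q * (2 * c * -s) + 2 * s * c) t := by
      have h1 := ((Real.hasDerivAt_cos t).pow 2).const_mul q
      have h2 := (Real.hasDerivAt_sin t).pow 2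
      refine (h1.add h2).congr_deriv ?_
      push_cast
      ring
    have hvne : q * c ^ 2 + s ^ 2 ≠ 0 := (hv t).ne'
    have hw := (hu.div hvd hvne).arctan
    have hfin := ((hasDerivAt_id t).add hw).div_const q
    refine hfin.congr_deriv (Eq.symm ?_)
    simp only [Pi.div_apply, ← hs, ← hc]
    set u := (1 - q) * (s * c) with hudef
    set v := q * c ^ 2 + s ^ 2 with hvdef
    set N := (1 - q) * (c * c + s * -s) * v - u * (q * (2 * c * -s) + 2 * s * c) with hN
    have h2' : v ^ 2 + u ^ 2 = 1 + m * c ^ 2 := by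
      rw [hudef, hvdef]
      linear_combination (c^4 + s^2*c^2) * hqsq + (s^2 + (1+m)*c^2 + 1) * hsc
    have h3' : (1 + m * c ^ 2) + N = q := by
      rw [hN, hudef, hvdef]
      linear_combination (-(c^2)) * hqsq + (1-q)*(q*c^2-s^2-1) * hsc
    have hvv : (1:ℝ) + (u / v) ^ 2 = (v ^ 2 + u ^ 2) / v ^ 2 := by
      field_simp
    have hD : (0:ℝ) < 1 + m * c ^ 2 := hpos t
    have hvne2 : v ^ 2 ≠ 0 := pow_ne_zero 2 hvne
    clear_value s c u v N
    rw [hvv, h2']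
    have e1 : 1 / ((1 + m * c ^ 2) / v ^ 2) * (N / v ^ 2) = N / (1 + m * c ^ 2) := by
      rw [one_div_div]
      field_simp
    have e2 : 1 + N / (1 + m * c ^ 2) = q / (1 + m * c ^ 2) := by
      field_simp
      linear_combination h3'
    rw [e1, e2]
    field_simp
  have hcont : Continuous fun t : ℝ => (1 + m * Real.cos t ^ 2)⁻¹ :=
    Continuous.inv₀ (by continuity) fun t => (hpos t).ne'
  rw [intervalIntegral.integral_eq_sub_of_hasDerivAt (fun t _ => hderiv t)
      (hcont.intervalIntegrable _ _)]
  rw [hG]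
  simp [Real.cos_pi_div_two, Real.sin_pi_div_two]
  ring

lemma pos_aux' {k b s : ℝ} (h : 0 < 1 + k * b ^ 2) (hs : s ^ 2 ≤ b ^ 2) :
    0 < 1 + k * s ^ 2 := by
  rcases le_or_gt 0 k with hk | hk
  · nlinarith [sq_nonneg s]
  · nlinarith

lemma sq_le_of_mem_uIcc' {t s : ℝ} (h : t ∈ Set.uIcc (0:ℝ) s) : t ^ 2 ≤ s ^ 2 := by
  rcases le_total (0:ℝ) s with hs | hs
  · rw [Set.uIcc_of_le hs] at h
    obtain ⟨h1, h2⟩ := h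
    nlinarith
  · rw [Set.uIcc_of_ge hs] at h
    obtain ⟨h1, h2⟩ := h
    nlinarith

lemma integral_eval' (k1 k2 s : ℝ) (hk : k1 < k2)
    (hA : ∀ t ∈ Set.uIcc (0:ℝ) s, 0 < 1 + k1 * t ^ 2)
    (hB : ∀ t ∈ Set.uIcc (0:ℝ) s, 0 < 1 + k2 * t ^ 2) :
    (∫ t in (0:ℝ)..s, Real.sqrt (k2 - k1) / (2 * (1 + k1 * t ^ 2) * Real.sqrt (1 + k2 * t ^ 2)))
    = (Real.log (Real.sqrt (1 + k2 * s ^ 2) + Real.sqrt (k2 - k1) * s)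
        - Real.log (1 + k1 * s ^ 2) / 2) / 2 := by
  set c := Real.sqrt (k2 - k1) with hc
  have hc2 : c ^ 2 = k2 - k1 := Real.sq_sqrt (by linarith)
  have hc0 : 0 ≤ c := Real.sqrt_nonneg _
  set H : ℝ → ℝ := fun t =>
    (Real.log (Real.sqrt (1 + k2 * t ^ 2) + c * t) - Real.log (1 + k1 * t ^ 2) / 2) / 2 with hH
  have hderiv : ∀ t ∈ Set.uIcc (0:ℝ) s,
      HasDerivAt H (c / (2 * (1 + k1 * t ^ 2) * Real.sqrt (1 + k2 * t ^ 2))) t := by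
    intro t ht
    have hAt : 0 < 1 + k1 * t ^ 2 := hA t ht
    have hBt : 0 < 1 + k2 * t ^ 2 := hB t ht
    have hβ0 : 0 < Real.sqrt (1 + k2 * t ^ 2) := Real.sqrt_pos.mpr hBt
    have hβsq : Real.sqrt (1 + k2 * t ^ 2) ^ 2 = 1 + k2 * t ^ 2 := Real.sq_sqrt hBt.le
    have hnum : 0 < Real.sqrt (1 + k2 * t ^ 2) + c * t := by
      nlinarith [hβsq, hc2, sq_nonneg (Real.sqrt (1 + k2 * t ^ 2) + c * t)]
    have hB' : HasDerivAt (fun t : ℝ => 1 + k2 * t ^ 2) (k2 * (2 * t)) t := by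
      simpa using ((hasDerivAt_pow 2 t).const_mul k2).const_add 1
    have hA' : HasDerivAt (fun t : ℝ => 1 + k1 * t ^ 2) (k1 * (2 * t)) t := by
      simpa using ((hasDerivAt_pow 2 t).const_mul k1).const_add 1
    have hsB := hB'.sqrt hBt.ne'
    have hlin : HasDerivAt (fun t : ℝ => c * t) c t := by
      simpa using (hasDerivAt_id t).const_mul c
    have hnumd := hsB.add hlin
    have hlog1 := hnumd.log hnum.ne'
    have hlog2 := hA'.log hAt.ne'
    have hfin := (hlog1.sub (hlog2.div_const 2)).div_const 2
    refine hfin.congr_deriv (Eq.symm ?_)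
    simp only [Pi.add_apply]
    set β := Real.sqrt (1 + k2 * t ^ 2) with hβ
    clear_value β
    rw [eq_comm]
    field_simp [hnum.ne', hAt.ne', hβ0.ne']
    have hne1 : β + t * c ≠ 0 := by nlinarith
    have hne2 : 1 + t ^ 2 * k1 ≠ 0 := by nlinarith
    rw [div_sub_div _ _ hne1 hne2, div_eq_div_iff (mul_ne_zero hne1 hne2) hne2]
    linear_combination (-(t*k1*(1+t^2*k1))) * hβsq - (t*(1+t^2*k1)) * hc2
  have hcont : ContinuousOn
      (fun t => c / (2 * (1 + k1 * t ^ 2) * Real.sqrt (1 + k2 * t ^ 2)))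
      (Set.uIcc (0:ℝ) s) := by
    apply ContinuousOn.div continuousOn_const
    · fun_prop
    · intro t ht
      have hAt : 0 < 1 + k1 * t ^ 2 := hA t ht
      have hβ0 : 0 < Real.sqrt (1 + k2 * t ^ 2) := Real.sqrt_pos.mpr (hB t ht)
      positivity
  rw [intervalIntegral.integral_eq_sub_of_hasDerivAt hderiv
      (hcont.intervalIntegrable)]
  simp [hH]

lemma pair_sum {y z A : ℝ} (hy : 0 < y) (hp1 : 0 < y + z) (hp2 : 0 < y - z)
    (hA : y ^ 2 - z ^ 2 = A) (hA0 : 0 < A) :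
    (y * (y + z))⁻¹ + (y * (y - z))⁻¹ = 2 * A⁻¹ := by
  have hAf : A = (y + z) * (y - z) := by linear_combination -hA
  rw [hAf]
  field_simp
  ring

lemma phi_sq' (k1 k2 s : ℝ) (hk : k1 < k2) (φ : ℝ → ℝ)
    (hφ : ∀ s, φ s = ((1 + k1 * s ^ 2) * (1 + k2 * s ^ 2)) ^ ((1 : ℝ) / 4) *
      Real.exp (∫ t in (0 : ℝ)..s,
        Real.sqrt (k2 - k1) / (2 * (1 + k1 * t ^ 2) * Real.sqrt (1 + k2 * t ^ 2))))
    (hA : ∀ t ∈ Set.uIcc (0:ℝ) s, 0 < 1 + k1 * t ^ 2)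
    (hB : ∀ t ∈ Set.uIcc (0:ℝ) s, 0 < 1 + k2 * t ^ 2) :
    φ s ^ 2 = Real.sqrt (1 + k2 * s ^ 2) *
      (Real.sqrt (1 + k2 * s ^ 2) + Real.sqrt (k2 - k1) * s) := by
  have hAs : 0 < 1 + k1 * s ^ 2 := hA s Set.right_mem_uIcc
  have hBs : 0 < 1 + k2 * s ^ 2 := hB s Set.right_mem_uIcc
  set c := Real.sqrt (k2 - k1) with hc
  have hc2 : c ^ 2 = k2 - k1 := Real.sq_sqrt (by linarith)
  set β := Real.sqrt (1 + k2 * s ^ 2) with hβ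
  have hβ0 : 0 < β := Real.sqrt_pos.mpr hBs
  have hβsq : β ^ 2 = 1 + k2 * s ^ 2 := Real.sq_sqrt hBs.le
  have hnum : 0 < β + c * s := by
    nlinarith [sq_nonneg (β + c * s)]
  have hsA0 : 0 < Real.sqrt (1 + k1 * s ^ 2) := Real.sqrt_pos.mpr hAs
  rw [hφ s, integral_eval' k1 k2 s hk hA hB, mul_pow]
  have e1 : Real.exp ((Real.log (β + c * s) - Real.log (1 + k1 * s ^ 2) / 2) / 2) ^ 2
      = (β + c * s) / Real.sqrt (1 + k1 * s ^ 2) := by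
    rw [sq, ← Real.exp_add]
    have : (Real.log (β + c * s) - Real.log (1 + k1 * s ^ 2) / 2) / 2 +
        (Real.log (β + c * s) - Real.log (1 + k1 * s ^ 2) / 2) / 2
        = Real.log (β + c * s) - Real.log (1 + k1 * s ^ 2) / 2 := by ring
    rw [this, Real.exp_sub, Real.exp_log hnum,
      show Real.log (1 + k1 * s ^ 2) / 2 = Real.log (Real.sqrt (1 + k1 * s ^ 2)) from
        (Real.log_sqrt hAs.le).symm,
      Real.exp_log hsA0]
  have e2 : (((1 + k1 * s ^ 2) * (1 + k2 * s ^ 2)) ^ ((1:ℝ)/4)) ^ 2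
      = Real.sqrt (1 + k1 * s ^ 2) * β := by
    have hABpos : (0:ℝ) < (1 + k1 * s ^ 2) * (1 + k2 * s ^ 2) := mul_pos hAs hBs
    rw [← Real.rpow_natCast (((1 + k1 * s ^ 2) * (1 + k2 * s ^ 2)) ^ ((1:ℝ)/4)) 2,
      ← Real.rpow_mul hABpos.le]
    norm_num
    rw [← Real.sqrt_eq_rpow, Real.sqrt_mul hAs.le]
  rw [e1, e2]
  field_simp

/-- the n = 2 Busemann–Hausdorff volume factor of the paper's φ
is `√(1+k1 b²)`. -/
theorem stmt_6 (k1 k2 b : ℝ) (hk : k1 < k2) (hb : 0 ≤ b)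
    (h1 : 0 < 1 + k1 * b ^ 2) (h2 : 0 < 1 + k2 * b ^ 2)
    (φ : ℝ → ℝ)
    (hφ : ∀ s, φ s = ((1 + k1 * s ^ 2) * (1 + k2 * s ^ 2)) ^ ((1 : ℝ) / 4) *
      Real.exp (∫ t in (0 : ℝ)..s,
        Real.sqrt (k2 - k1) / (2 * (1 + k1 * t ^ 2) * Real.sqrt (1 + k2 * t ^ 2)))) :
    (∫ t in (0 : ℝ)..Real.pi, (φ (b * Real.cos t) ^ 2)⁻¹) =
        Real.pi / Real.sqrt (1 + k1 * b ^ 2) ∧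
      Real.pi / (∫ t in (0 : ℝ)..Real.pi, (φ (b * Real.cos t) ^ 2)⁻¹) =
        Real.sqrt (1 + k1 * b ^ 2) := by
  set c := Real.sqrt (k2 - k1) with hc
  have hc2 : c ^ 2 = k2 - k1 := Real.sq_sqrt (by linarith)
  have hsq_le : ∀ t : ℝ, (b * Real.cos t) ^ 2 ≤ b ^ 2 := by
    intro t
    nlinarith [mul_le_mul_of_nonneg_left (Real.cos_sq_le_one t) (sq_nonneg b)]
  have hphi : ∀ u : ℝ, u ^ 2 ≤ b ^ 2 →
      φ u ^ 2 = Real.sqrt (1 + k2 * u ^ 2) * (Real.sqrt (1 + k2 * u ^ 2) + c * u) := by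
    intro u hu
    exact phi_sq' k1 k2 u hk φ hφ
      (fun t ht => pos_aux' h1 ((sq_le_of_mem_uIcc' ht).trans hu))
      (fun t ht => pos_aux' h2 ((sq_le_of_mem_uIcc' ht).trans hu))
  set G2 : ℝ → ℝ := fun t =>
    (Real.sqrt (1 + k2 * (b * Real.cos t) ^ 2) *
      (Real.sqrt (1 + k2 * (b * Real.cos t) ^ 2) + c * (b * Real.cos t)))⁻¹ with hG2
  have hfuneq : (fun t => (φ (b * Real.cos t) ^ 2)⁻¹) = G2 := by
    funext t
    rw [hphi _ (hsq_le t)]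
  have hG2pos : ∀ t : ℝ, 0 < Real.sqrt (1 + k2 * (b * Real.cos t) ^ 2) *
      (Real.sqrt (1 + k2 * (b * Real.cos t) ^ 2) + c * (b * Real.cos t)) := by
    intro t
    have hAt : 0 < 1 + k1 * (b * Real.cos t) ^ 2 := pos_aux' h1 (hsq_le t)
    have hBt : 0 < 1 + k2 * (b * Real.cos t) ^ 2 := pos_aux' h2 (hsq_le t)
    have hβ0 : 0 < Real.sqrt (1 + k2 * (b * Real.cos t) ^ 2) := Real.sqrt_pos.mpr hBt
    have hβsq := Real.sq_sqrt hBt.le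
    apply mul_pos hβ0
    nlinarith [sq_nonneg (Real.sqrt (1 + k2 * (b * Real.cos t) ^ 2) + c * (b * Real.cos t))]
  have hG2cont : Continuous G2 := by
    apply Continuous.inv₀ _ (fun t => (hG2pos t).ne')
    fun_prop
  have hint : ∀ x y : ℝ, IntervalIntegrable G2 MeasureTheory.volume x y :=
    fun x y => hG2cont.intervalIntegrable x y
  have hX0 : 0 < Real.sqrt (1 + k1 * b ^ 2) := Real.sqrt_pos.mpr h1
  have hmain : (∫ t in (0 : ℝ)..Real.pi, G2 t) = Real.pi / Real.sqrt (1 + k1 * b ^ 2) := by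
    rw [← intervalIntegral.integral_add_adjacent_intervals (hint 0 (Real.pi/2))
        (hint (Real.pi/2) Real.pi)]
    have hcomp : (∫ t in (0:ℝ)..(Real.pi/2), G2 (Real.pi - t))
        = ∫ t in (Real.pi/2)..Real.pi, G2 t := by
      rw [intervalIntegral.integral_comp_sub_left G2 Real.pi]
      norm_num [sub_half]
    have hint2 : IntervalIntegrable (fun t => G2 (Real.pi - t)) MeasureTheory.volume 0 (Real.pi/2) :=
      ((hG2cont.comp (continuous_const.sub continuous_id)).intervalIntegrable _ _)
    rw [← hcomp, ← intervalIntegral.integral_add (hint 0 (Real.pi/2)) hint2]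
    have heq : ∀ t : ℝ, G2 t + G2 (Real.pi - t)
        = 2 * (1 + (k1 * b ^ 2) * Real.cos t ^ 2)⁻¹ := by
      intro t
      have hAt : 0 < 1 + k1 * (b * Real.cos t) ^ 2 := pos_aux' h1 (hsq_le t)
      have hBt : 0 < 1 + k2 * (b * Real.cos t) ^ 2 := pos_aux' h2 (hsq_le t)
      have hβ0 : 0 < Real.sqrt (1 + k2 * (b * Real.cos t) ^ 2) := Real.sqrt_pos.mpr hBt
      have hβsq : Real.sqrt (1 + k2 * (b * Real.cos t) ^ 2) ^ 2
          = 1 + k2 * (b * Real.cos t) ^ 2 := Real.sq_sqrt hBt.le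
      have hc2' : G2 (Real.pi - t) = (Real.sqrt (1 + k2 * (b * Real.cos t) ^ 2) *
          (Real.sqrt (1 + k2 * (b * Real.cos t) ^ 2) - c * (b * Real.cos t)))⁻¹ := by
        rw [hG2]
        simp only [Real.cos_pi_sub, mul_neg, neg_sq, ← sub_eq_add_neg]
      have hDx : 1 + (k1 * b ^ 2) * Real.cos t ^ 2 = 1 + k1 * (b * Real.cos t) ^ 2 := by
        ring
      rw [hc2', hDx, hG2]
      have hAeq : Real.sqrt (1 + k2 * (b * Real.cos t) ^ 2) ^ 2 - (c * (b * Real.cos t)) ^ 2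
          = 1 + k1 * (b * Real.cos t) ^ 2 := by
        linear_combination hβsq - (b * Real.cos t) ^ 2 * hc2
      exact pair_sum hβ0
        (by nlinarith [hAeq, hAt, hβ0])
        (by nlinarith [hAeq, hAt, hβ0]) hAeq hAt
    simp only [heq]
    rw [intervalIntegral.integral_const_mul, cos_sq_integral (k1 * b ^ 2) (by linarith)]
    rw [show (1 : ℝ) + k1 * b ^ 2 = 1 + k1 * b ^ 2 from rfl]
    field_simp
  have hrw : (∫ t in (0:ℝ)..Real.pi, (φ (b * Real.cos t) ^ 2)⁻¹)
      = ∫ t in (0:ℝ)..Real.pi, G2 t :=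
    intervalIntegral.integral_congr (fun t _ => by rw [hphi _ (hsq_le t)])
  constructor
  · rw [hrw, hmain]
  · rw [hrw, hmain]
    field_simp
end

section
/- Let a₁, a₂ be reals with a₁ ≠ 0, set k1 = 2a₂−3a₁², k2 = 2a₂+a₁², and let b > 0 with 1+2a₂b² ≠ 0 and 1+k1b² > 0. Then the pair δ = (3a₁²−2a₂)(1+(2a₂+a₁²)b²)/(1+2a₂b²) and λ = ((3a₁²−2a₂)(2a₂+a₁²)b²+2(a₁²−a₂))/(1+2a₂b²) satisfies the compatibility relation δ = −(f'(b)/(b·f(b)))·(1−λb²) with f(b) = √(1+(2a₂−3a₁²)b²); i.e., substituting f(b) = √(1+k1b²) into −f'(b)(1−λb²)/(b f(b)) gives exactly δ. -/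
/-- the pair `(δ, λ)` of formulas (4.24)–(4.25) satisfies the defining
relation `δ = −(f'(b)/(b f(b)))(1 − λb²)` with `f(b) = √(1+(2a₂−3a₁²)b²)`. -/
theorem stmt_19 (a1 a2 b k1 δ lam : ℝ) (ha1 : a1 ≠ 0) (hb : 0 < b)
    (hk1 : k1 = 2 * a2 - 3 * a1 ^ 2)
    (h1 : 1 + 2 * a2 * b ^ 2 ≠ 0) (h2 : 0 < 1 + k1 * b ^ 2)
    (f : ℝ → ℝ) (hf : ∀ x, f x = Real.sqrt (1 + k1 * x ^ 2))
    (hδ : δ = (3 * a1 ^ 2 - 2 * a2) * (1 + (2 * a2 + a1 ^ 2) * b ^ 2) / (1 + 2 * a2 * b ^ 2))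
    (hlam : lam = ((3 * a1 ^ 2 - 2 * a2) * (2 * a2 + a1 ^ 2) * b ^ 2 + 2 * (a1 ^ 2 - a2)) /
      (1 + 2 * a2 * b ^ 2)) :
    δ = -(deriv f b / (b * f b)) * (1 - lam * b ^ 2) := by
  have hs : Real.sqrt (1 + k1 * b ^ 2) ≠ 0 := by positivity
  have hinner : HasDerivAt (fun x : ℝ => 1 + k1 * x ^ 2) (k1 * (2 * b)) b := by
    simpa using ((hasDerivAt_pow 2 b).const_mul k1).const_add 1
  have hd : HasDerivAt f (k1 * (2 * b) / (2 * Real.sqrt (1 + k1 * b ^ 2))) b :=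
    (hinner.sqrt (by positivity)).congr_of_eventuallyEq
      (Filter.Eventually.of_forall fun x => hf x)
  have hsq : Real.sqrt (1 + k1 * b ^ 2) ^ 2 = 1 + k1 * b ^ 2 := Real.sq_sqrt h2.le
  have key : deriv f b / (b * f b) = k1 / (1 + k1 * b ^ 2) := by
    rw [hd.deriv, hf b]
    rw [div_div]
    rw [show 2 * Real.sqrt (1 + k1 * b ^ 2) * (b * Real.sqrt (1 + k1 * b ^ 2))
        = 2 * b * (1 + k1 * b ^ 2) by nlinarith [hsq]]
    rw [div_eq_div_iff (by positivity) h2.ne']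
    ring
  rw [key, hδ, hlam, hk1]
  have hne : (1 : ℝ) + (2 * a2 - 3 * a1 ^ 2) * b ^ 2 ≠ 0 := by rw [← hk1]; positivity
  have hne' : (1 : ℝ) + b ^ 2 * (2 * a2 - 3 * a1 ^ 2) ≠ 0 := by rwa [mul_comm]
  field_simp
  ring
end
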